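/- Let (X_i, X̊_i, ξ_i)_{i∈I} be a family of vector spaces with specified vectors, (X, X̊, ξ) their reduced free product, and φ_ξ the associated functional on L(X). Set A_{i,ℓ} = λ_i(L(X_i)) and A_{i,c} = P_i λ_i(L(X_i)) P_i. Let z₁ ∈ A_{i,c} and z₂ ∈ A_{j,c} for some i, j ∈ I. Then there exist T₁ ∈ A_{i,ℓ} and T₂ ∈ A_{j,ℓ} such that φ_ξ(z₁ z z₂) = φ_ξ(T₁ z T₂) for all z ∈ L(X); moreover T₁ and T₂ are uniquely determined by z₁ and z₂ respectively. -/

import Mathlib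

open scoped TensorProduct DirectSum

noncomputable section

namespace FFB

/-- A bundled complex vector space (used to form tensor products of the subspaces
`X̊_{i₁} ⊗ ⋯ ⊗ X̊_{iₙ}` by recursion). -/
structure VS : Type 1 where
  carrier : Type
  [grp : AddCommGroup carrier]
  [mod : Module ℂ carrier]

attribute [instance] VS.grp VS.mod

instance : CoeSort VS Type := ⟨VS.carrier⟩

/-- Bundle a complex vector space. -/
def VS.of (X : Type) [AddCommGroup X] [Module ℂ X] : VS := ⟨X⟩

variable {I : Type} [DecidableEq I]

/-- The tensor word `M i ⊗ M j₁ ⊗ ⋯ ⊗ M jₖ` for the word `i :: [j₁,…,jₖ]`. -/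
def TW (M : I → VS) : I → List I → VS
  | i, [] => M i
  | i, j :: w => VS.of ((M i : Type) ⊗[ℂ] (TW M j w : Type))

/-- Alternating words: nonempty words `i₁ i₂ ⋯ iₙ` with `i₁ ≠ i₂ ≠ ⋯ ≠ iₙ`, encoded as a
head together with a tail. -/
abbrev AW (I : Type) : Type := {p : I × List I // List.Chain' (· ≠ ·) (p.1 :: p.2)}

/-- The summand `X̊_{i₁} ⊗ ⋯ ⊗ X̊_{iₙ}` of the reduced free product associated to an
alternating word. -/
def WSp (M : I → VS) (p : AW I) : VS := TW M p.1.1 p.1.2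

/-- `X̊`, the reduced free product of the subspaces:
`X̊ = ⊕_{n≥1} ⊕_{i₁≠i₂≠⋯≠iₙ} X̊_{i₁} ⊗ ⋯ ⊗ X̊_{iₙ}`. -/
abbrev FPo (M : I → VS) : Type := ⨁ p : AW I, (WSp M p : Type)

/-- The reduced free product `X = ℂξ ⊕ X̊`. -/
abbrev FPr (M : I → VS) : Type := ℂ × FPo M

/-- The specified vector `ξ` of the reduced free product. -/
def xiFP (M : I → VS) : FPr M := (1, 0)

/-- Alternating words not starting with `i`. -/
abbrev AWl (I : Type) (i : I) : Type := {p : AW I // p.1.1 ≠ i}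

/-- Alternating words not ending with `i`. -/
abbrev AWr (I : Type) (i : I) : Type :=
  {p : AW I // (p.1.1 :: p.1.2).getLast (List.cons_ne_nil _ _) ≠ i}

/-- `X̊(ℓ,i)`, the part of `X̊` spanned by words not starting with `i`. -/
abbrev FPLo (M : I → VS) (i : I) : Type := ⨁ p : AWl I i, (WSp M p.1 : Type)

/-- `X(ℓ,i) = ℂξ ⊕ X̊(ℓ,i)`. -/
abbrev FPL (M : I → VS) (i : I) : Type := ℂ × FPLo M i

/-- `X̊(r,i)`, the part of `X̊` spanned by words not ending with `i`. -/
abbrev FPRo (M : I → VS) (i : I) : Type := ⨁ p : AWr I i, (WSp M p.1 : Type)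

/-- `X(r,i) = ℂξ ⊕ X̊(r,i)`. -/
abbrev FPR (M : I → VS) (i : I) : Type := ℂ × FPRo M i

/-- The single-letter word `i`. -/
def sing (i : I) : AW I := ⟨(i, []), List.isChain_singleton i⟩

/-- Prepend the letter `i` to an alternating word not starting with `i`. -/
def consW (i : I) (p : AW I) (h : p.1.1 ≠ i) : AW I :=
  ⟨(i, p.1.1 :: p.1.2), List.isChain_cons_cons.mpr ⟨Ne.symm h, p.2⟩⟩

/-- Append the letter `i` to an alternating word not ending with `i`. -/
def snocW (p : AW I) (i : I)
    (h : (p.1.1 :: p.1.2).getLast (List.cons_ne_nil _ _) ≠ i) : AW I :=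
  ⟨(p.1.1, p.1.2 ++ [i]), by
    have hp := p.2
    have : (p.1.1 :: (p.1.2 ++ [i])) = (p.1.1 :: p.1.2) ++ [i] := by simp
    rw [this, List.Chain', List.isChain_append]
    refine ⟨hp, List.isChain_singleton i, ?_⟩
    intro x hx y hy
    rw [List.getLast?_eq_some_getLast (List.cons_ne_nil _ _)] at hx
    simp only [List.head?_cons, Option.mem_def, Option.some.injEq] at hx hy
    subst hx; subst hy
    exact h⟩

/-- The canonical identification of `X̊_{i₁} ⊗ ⋯ ⊗ X̊_{iₙ} ⊗ X̊_j` with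
`(X̊_{i₁} ⊗ ⋯ ⊗ X̊_{iₙ}) ⊗ X̊_j` (regrouping the right-nested tensor word). -/
def snocIso (M : I → VS) : ∀ (j : I) (w : List I) (i : I),
    (TW M j (w ++ [i]) : Type) ≃ₗ[ℂ] ((TW M j w : Type) ⊗[ℂ] (M i : Type))
  | j, [], i => LinearEquiv.refl ℂ ((M j : Type) ⊗[ℂ] (M i : Type))
  | j, k :: w, i =>
      (TensorProduct.congr (LinearEquiv.refl ℂ (M j : Type)) (snocIso M k w i)).trans
        (TensorProduct.assoc ℂ (M j : Type) (TW M k w : Type) (M i : Type)).symm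

/-- The projection `P_i` of the reduced free product `X` onto `ℂξ ⊕ X̊_i`, vanishing on all
the other direct summands. -/
def Pproj (M : I → VS) (i : I) : FPr M →ₗ[ℂ] FPr M :=
  (LinearMap.fst ℂ ℂ (FPo M)).prod
    (((DirectSum.lof ℂ (AW I) (fun p => (WSp M p : Type)) (sing i)).comp
        (DirectSum.component ℂ (AW I) (fun p => (WSp M p : Type)) (sing i))).comp
      (LinearMap.snd ℂ ℂ (FPo M)))

section Spaces

variable (X : I → Type) [∀ i, AddCommGroup (X i)] [∀ i, Module ℂ (X i)]
variable (Xo : ∀ i, Submodule ℂ (X i)) (ξ : ∀ i, X i)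

/-- The family of subspaces `X̊_i`, bundled. -/
def Mf : I → VS := fun i => VS.of (Xo i)

/-- `V_i : X_i ⊗ X(ℓ,i) → X` is the *natural* isomorphism: it identifies
`ξ_i ⊗ ξ` with `ξ`, `x̊ ⊗ ξ` with `x̊` (in the summand indexed by the word `i`),
`ξ_i ⊗ (x̊_{i₁} ⊗ ⋯ ⊗ x̊_{iₙ})` with `x̊_{i₁} ⊗ ⋯ ⊗ x̊_{iₙ}` (for `i₁ ≠ i`), and
`x̊ ⊗ (x̊_{i₁} ⊗ ⋯ ⊗ x̊_{iₙ})` with `x̊ ⊗ x̊_{i₁} ⊗ ⋯ ⊗ x̊_{iₙ}`. -/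
def NaturalL (i : I) (V : (X i ⊗[ℂ] FPL (Mf X Xo) i) ≃ₗ[ℂ] FPr (Mf X Xo)) : Prop :=
  (V (ξ i ⊗ₜ[ℂ] ((1, 0) : FPL (Mf X Xo) i)) = xiFP (Mf X Xo)) ∧
  (∀ m : Xo i, V ((m : X i) ⊗ₜ[ℂ] ((1, 0) : FPL (Mf X Xo) i)) =
    (0, DirectSum.of (fun p => (WSp (Mf X Xo) p : Type)) (sing i) m)) ∧
  (∀ (p : AWl I i) (t : WSp (Mf X Xo) p.1),
    V (ξ i ⊗ₜ[ℂ]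
        ((0, DirectSum.of (fun q : AWl I i => (WSp (Mf X Xo) q.1 : Type)) p t) :
          FPL (Mf X Xo) i)) =
      (0, DirectSum.of (fun q => (WSp (Mf X Xo) q : Type)) p.1 t)) ∧
  (∀ (m : Xo i) (p : AWl I i) (t : WSp (Mf X Xo) p.1),
    V ((m : X i) ⊗ₜ[ℂ]
        ((0, DirectSum.of (fun q : AWl I i => (WSp (Mf X Xo) q.1 : Type)) p t) :
          FPL (Mf X Xo) i)) =
      (0, DirectSum.of (fun q => (WSp (Mf X Xo) q : Type)) (consW i p.1 p.2)
            (m ⊗ₜ[ℂ] t)))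

/-- `W_i : X(r,i) ⊗ X_i → X` is the *natural* isomorphism (mirror image of `V_i`). -/
def NaturalR (i : I) (W : (FPR (Mf X Xo) i ⊗[ℂ] X i) ≃ₗ[ℂ] FPr (Mf X Xo)) : Prop :=
  (W (((1, 0) : FPR (Mf X Xo) i) ⊗ₜ[ℂ] ξ i) = xiFP (Mf X Xo)) ∧
  (∀ m : Xo i, W (((1, 0) : FPR (Mf X Xo) i) ⊗ₜ[ℂ] (m : X i)) =
    (0, DirectSum.of (fun p => (WSp (Mf X Xo) p : Type)) (sing i) m)) ∧
  (∀ (p : AWr I i) (t : WSp (Mf X Xo) p.1),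
    W (((0, DirectSum.of (fun q : AWr I i => (WSp (Mf X Xo) q.1 : Type)) p t) :
          FPR (Mf X Xo) i) ⊗ₜ[ℂ] ξ i) =
      (0, DirectSum.of (fun q => (WSp (Mf X Xo) q : Type)) p.1 t)) ∧
  (∀ (p : AWr I i) (t : WSp (Mf X Xo) p.1) (m : Xo i),
    W (((0, DirectSum.of (fun q : AWr I i => (WSp (Mf X Xo) q.1 : Type)) p t) :
          FPR (Mf X Xo) i) ⊗ₜ[ℂ] (m : X i)) =
      (0, DirectSum.of (fun q => (WSp (Mf X Xo) q : Type)) (snocW p.1 i p.2)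
            ((snocIso (Mf X Xo) p.1.1.1 p.1.1.2 i).symm (t ⊗ₜ[ℂ] m))))

/-- The left regular representation `λ_i(T) = V_i (T ⊗ I) V_i⁻¹`. -/
def lam (V : ∀ i, (X i ⊗[ℂ] FPL (Mf X Xo) i) ≃ₗ[ℂ] FPr (Mf X Xo)) (i : I)
    (T : X i →ₗ[ℂ] X i) : FPr (Mf X Xo) →ₗ[ℂ] FPr (Mf X Xo) :=
  (V i).toLinearMap ∘ₗ (TensorProduct.map T LinearMap.id) ∘ₗ (V i).symm.toLinearMap

/-- The right regular representation `ρ_i(T) = W_i (I ⊗ T) W_i⁻¹`. -/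
def rho (W : ∀ i, (FPR (Mf X Xo) i ⊗[ℂ] X i) ≃ₗ[ℂ] FPr (Mf X Xo)) (i : I)
    (T : X i →ₗ[ℂ] X i) : FPr (Mf X Xo) →ₗ[ℂ] FPr (Mf X Xo) :=
  (W i).toLinearMap ∘ₗ (TensorProduct.map LinearMap.id T) ∘ₗ (W i).symm.toLinearMap

/-- The vector state `φ_ξ(T) = φ(Tξ)` associated with the specified vector `ξ` of the
reduced free product (`φ` being the functional with `φ(ξ) = 1`, `ker φ = X̊`). -/
def phiXi (T : FPr (Mf X Xo) →ₗ[ℂ] FPr (Mf X Xo)) : ℂ := (T (xiFP (Mf X Xo))).1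

end Spaces

end FFB

namespace FFB

section Aux

variable {I : Type} [DecidableEq I]
variable (X : I → Type) [∀ i, AddCommGroup (X i)] [∀ i, Module ℂ (X i)]
variable (Xo : ∀ i, Submodule ℂ (X i)) (ξ : ∀ i, X i)
variable (V : ∀ i, (X i ⊗[ℂ] FPL (Mf X Xo) i) ≃ₗ[ℂ] FPr (Mf X Xo))

lemma decomp {E : Type} [AddCommGroup E] [Module ℂ E] {ξ₀ : E} {p : Submodule ℂ E}
    (h : IsCompl (ℂ ∙ ξ₀) p) (x : E) : ∃ c : ℂ, ∃ m : p, x = c • ξ₀ + m := by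
  have hx : x ∈ (ℂ ∙ ξ₀) ⊔ p := by rw [h.sup_eq_top]; trivial
  obtain ⟨y, hy, z, hz, rfl⟩ := Submodule.mem_sup.mp hx
  obtain ⟨c, rfl⟩ := Submodule.mem_span_singleton.mp hy
  exact ⟨c, ⟨z, hz⟩, rfl⟩

lemma lam_V (i : I) (a : X i →ₗ[ℂ] X i) (x : X i) (v : FPL (Mf X Xo) i) :
    lam X Xo V i a (V i (x ⊗ₜ v)) = V i (a x ⊗ₜ v) := by
  simp [lam]

lemma fst_V_zero (i : I) (hVi : NaturalL X Xo ξ i (V i))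
    (hci : IsCompl (ℂ ∙ ξ i) (Xo i)) (x : X i) (w : FPLo (Mf X Xo) i) :
    (V i (x ⊗ₜ ((0, w) : FPL (Mf X Xo) i))).1 = 0 := by
  obtain ⟨c, m, rfl⟩ := decomp hci x
  obtain ⟨h1, h2, h3, h4⟩ := hVi
  refine DirectSum.induction_on w ?_ ?_ ?_
  · show (V i (_ ⊗ₜ ((0, (0 : FPLo (Mf X Xo) i)) : FPL (Mf X Xo) i))).1 = 0
    have : ((0, (0 : FPLo (Mf X Xo) i)) : FPL (Mf X Xo) i) = 0 := rfl
    rw [this, TensorProduct.tmul_zero, map_zero]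
    rfl
  · intro p t
    rw [TensorProduct.add_tmul, ← TensorProduct.smul_tmul', map_add, map_smul,
      h3 p t, h4 m p t]
    simp
  · intro w1 w2 ih1 ih2
    have : ((0, w1 + w2) : FPL (Mf X Xo) i)
        = ((0, w1) : FPL (Mf X Xo) i) + ((0, w2) : FPL (Mf X Xo) i) := by
      simp
    rw [this, TensorProduct.tmul_add, map_add, Prod.fst_add, ih1, ih2, add_zero]

lemma Pproj_fst (M : I → VS) (i : I) (u : FPr M) : (Pproj M i u).1 = u.1 := rfl

lemma Pproj_fix (M : I → VS) (i : I) (c : ℂ) (m : (WSp M (sing i) : Type)) :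
    Pproj M i (c, DirectSum.of (fun p => (WSp M p : Type)) (sing i) m)
      = (c, DirectSum.of (fun p => (WSp M p : Type)) (sing i) m) := by
  simp only [Pproj, LinearMap.prod_apply, LinearMap.coe_comp, Function.comp_apply,
    LinearMap.fst_apply, LinearMap.snd_apply, Function.prod]
  rw [← DirectSum.lof_eq_of ℂ, DirectSum.component.of]
  simp [DirectSum.lof_eq_of]

lemma Pproj_kill (M : I → VS) (i : I) (p : AW I) (hp : p ≠ sing i)
    (t : WSp M p) :
    Pproj M i ((0, DirectSum.of (fun q => (WSp M q : Type)) p t) : FPr M) = 0 := by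
  simp only [Pproj, LinearMap.prod_apply, LinearMap.coe_comp, Function.comp_apply,
    LinearMap.fst_apply, LinearMap.snd_apply, Function.prod]
  rw [← DirectSum.lof_eq_of ℂ, DirectSum.component.of]
  rw [dif_neg hp]
  simp [Prod.ext_iff]

lemma Pproj_xi (M : I → VS) (i : I) : Pproj M i (xiFP M) = xiFP M := by
  simp only [Pproj, xiFP, LinearMap.prod_apply, LinearMap.coe_comp, Function.comp_apply,
    LinearMap.fst_apply, LinearMap.snd_apply, Pi.prod]
  simp [Prod.ext_iff]

lemma fst_lam_zero (i : I) (hVi : NaturalL X Xo ξ i (V i))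
    (hci : IsCompl (ℂ ∙ ξ i) (Xo i)) (a : X i →ₗ[ℂ] X i)
    (p : AW I) (hp : p ≠ sing i) (t : WSp (Mf X Xo) p) :
    (lam X Xo V i a ((0, DirectSum.of (fun q => (WSp (Mf X Xo) q : Type)) p t) :
      FPr (Mf X Xo))).1 = 0 := by
  obtain ⟨⟨k, w'⟩, ch⟩ := p
  by_cases hk : k = i
  · subst hk
    cases w' with
    | nil => exact absurd rfl hp
    | cons k' w'' =>
      obtain ⟨hik', ch'⟩ := List.isChain_cons_cons.mp ch
      set q : AWl I k := ⟨⟨(k', w''), ch'⟩, Ne.symm hik'⟩ with hq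
      refine TensorProduct.induction_on
        (motive := fun t' : (Xo k : Type) ⊗[ℂ] (TW (Mf X Xo) k' w'' : Type) =>
          (lam X Xo V k a ((0, DirectSum.of (fun r => (WSp (Mf X Xo) r : Type))
            ⟨(k, k' :: w''), ch⟩ t') : FPr (Mf X Xo))).1 = 0) t ?_ ?_ ?_
      · beta_reduce
        have h0 : DirectSum.of (fun r => (WSp (Mf X Xo) r : Type))
            (⟨(k, k' :: w''), ch⟩ : AW I) 0 = 0 := map_zero _
        erw [h0]
        have : ((0, (0 : FPo (Mf X Xo))) : FPr (Mf X Xo)) = 0 := rfl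
        rw [this, map_zero]; rfl
      · intro m s
        beta_reduce
        have h4 : V k ((m : X k) ⊗ₜ[ℂ]
            ((0, DirectSum.of (fun r : AWl I k => (WSp (Mf X Xo) r.1 : Type)) q s) :
              FPL (Mf X Xo) k)) =
            ((0, DirectSum.of (fun r => (WSp (Mf X Xo) r : Type))
              (⟨(k, k' :: w''), ch⟩ : AW I) ((m : Xo k) ⊗ₜ[ℂ] s)) : FPr (Mf X Xo)) :=
          hVi.2.2.2 m q s
        erw [← h4, lam_V]
        exact fst_V_zero X Xo ξ V k hVi hci _ _
      · intro t1 t2 ih1 ih2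
        beta_reduce at ih1 ih2 ⊢
        have hadd : DirectSum.of (fun r => (WSp (Mf X Xo) r : Type))
            (⟨(k, k' :: w''), ch⟩ : AW I) (t1 + t2)
            = DirectSum.of (fun r => (WSp (Mf X Xo) r : Type))
                (⟨(k, k' :: w''), ch⟩ : AW I) t1
            + DirectSum.of (fun r => (WSp (Mf X Xo) r : Type))
                (⟨(k, k' :: w''), ch⟩ : AW I) t2 := map_add _ _ _
        rw [hadd]
        have : ((0, DirectSum.of (fun r => (WSp (Mf X Xo) r : Type))
              (⟨(k, k' :: w''), ch⟩ : AW I) t1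
            + DirectSum.of (fun r => (WSp (Mf X Xo) r : Type))
              (⟨(k, k' :: w''), ch⟩ : AW I) t2) : FPr (Mf X Xo))
            = ((0, DirectSum.of (fun r => (WSp (Mf X Xo) r : Type))
                (⟨(k, k' :: w''), ch⟩ : AW I) t1) : FPr (Mf X Xo))
            + ((0, DirectSum.of (fun r => (WSp (Mf X Xo) r : Type))
                (⟨(k, k' :: w''), ch⟩ : AW I) t2) : FPr (Mf X Xo)) := by simp
        rw [this, map_add, Prod.fst_add, ih1, ih2, add_zero]
  · set q : AWl I i := ⟨⟨(k, w'), ch⟩, hk⟩ with hq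
    have h3 : V i (ξ i ⊗ₜ[ℂ]
        ((0, DirectSum.of (fun r : AWl I i => (WSp (Mf X Xo) r.1 : Type)) q t) :
          FPL (Mf X Xo) i)) =
        ((0, DirectSum.of (fun r => (WSp (Mf X Xo) r : Type))
          (⟨(k, w'), ch⟩ : AW I) t) : FPr (Mf X Xo)) := hVi.2.2.1 q t
    rw [← h3, lam_V]
    exact fst_V_zero X Xo ξ V i hVi hci _ _

lemma fst_lam_P (i : I) (hVi : NaturalL X Xo ξ i (V i))
    (hci : IsCompl (ℂ ∙ ξ i) (Xo i)) (a : X i →ₗ[ℂ] X i) (u : FPr (Mf X Xo)) :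
    (lam X Xo V i a (Pproj (Mf X Xo) i u)).1 = (lam X Xo V i a u).1 := by
  obtain ⟨c, w⟩ := u
  have hsplit : ((c, w) : FPr (Mf X Xo)) = (c, 0) + ((0, w) : FPr (Mf X Xo)) := by simp
  rw [hsplit, map_add, map_add, map_add, Prod.fst_add, Prod.fst_add]
  have hc : Pproj (Mf X Xo) i ((c, 0) : FPr (Mf X Xo)) = (c, 0) := by
    have : ((c, 0) : FPr (Mf X Xo)) = c • xiFP (Mf X Xo) := by simp [xiFP]
    rw [this, map_smul, Pproj_xi]
  rw [hc]
  congr 1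
  refine DirectSum.induction_on w ?_ ?_ ?_
  · have : ((0, (0 : FPo (Mf X Xo))) : FPr (Mf X Xo)) = 0 := rfl
    rw [this, map_zero]
  · intro p t
    by_cases hp : p = sing i
    · subst hp
      rw [Pproj_fix]
    · rw [Pproj_kill (Mf X Xo) i p hp t, map_zero,
        fst_lam_zero X Xo ξ V i hVi hci a p hp t]
      rfl
  · intro w1 w2 ih1 ih2
    have : ((0, w1 + w2) : FPr (Mf X Xo))
        = ((0, w1) : FPr (Mf X Xo)) + ((0, w2) : FPr (Mf X Xo)) := by simp
    rw [this, map_add, map_add, map_add, Prod.fst_add, Prod.fst_add, ih1, ih2]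

lemma lam_xi (i : I) (hVi : NaturalL X Xo ξ i (V i)) (a : X i →ₗ[ℂ] X i)
    {c : ℂ} {m : Xo i} (h : a (ξ i) = c • ξ i + m) :
    lam X Xo V i a (xiFP (Mf X Xo)) =
      (c, DirectSum.of (fun p => (WSp (Mf X Xo) p : Type)) (sing i) m) := by
  rw [← hVi.1, lam_V, h, TensorProduct.add_tmul, ← TensorProduct.smul_tmul', map_add,
    map_smul, hVi.1, hVi.2.1 m]
  simp [xiFP, Prod.ext_iff]

lemma Pproj_V_one (i : I) (hVi : NaturalL X Xo ξ i (V i))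
    (hci : IsCompl (ℂ ∙ ξ i) (Xo i)) (y : X i) :
    Pproj (Mf X Xo) i (V i (y ⊗ₜ ((1, 0) : FPL (Mf X Xo) i)))
      = V i (y ⊗ₜ ((1, 0) : FPL (Mf X Xo) i)) := by
  obtain ⟨c, m, rfl⟩ := decomp hci y
  rw [TensorProduct.add_tmul, ← TensorProduct.smul_tmul', map_add, map_smul,
    hVi.1, hVi.2.1 m, map_add, map_smul, Pproj_xi]
  exact congrArg (c • xiFP (Mf X Xo) + ·) (Pproj_fix (Mf X Xo) i 0 m)

lemma lam_compress_inj (i : I) (hVi : NaturalL X Xo ξ i (V i))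
    (hci : IsCompl (ℂ ∙ ξ i) (Xo i)) (a a' : X i →ₗ[ℂ] X i)
    (h : Pproj (Mf X Xo) i ∘ₗ lam X Xo V i a ∘ₗ Pproj (Mf X Xo) i
       = Pproj (Mf X Xo) i ∘ₗ lam X Xo V i a' ∘ₗ Pproj (Mf X Xo) i) :
    a = a' := by
  ext x
  have hx := LinearMap.congr_fun h (V i (x ⊗ₜ ((1, 0) : FPL (Mf X Xo) i)))
  simp only [LinearMap.coe_comp, Function.comp_apply] at hx
  rw [Pproj_V_one X Xo ξ V i hVi hci x, lam_V, lam_V,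
    Pproj_V_one X Xo ξ V i hVi hci (a x), Pproj_V_one X Xo ξ V i hVi hci (a' x)] at hx
  have htmul := (V i).injective hx
  let R : (X i ⊗[ℂ] FPL (Mf X Xo) i) →ₗ[ℂ] X i :=
    (TensorProduct.rid ℂ (X i)).toLinearMap ∘ₗ
      TensorProduct.map LinearMap.id (LinearMap.fst ℂ ℂ (FPLo (Mf X Xo) i))
  have := congrArg R htmul
  simpa [R, TensorProduct.rid_tmul] using this

end Aux

/-- Let `(X, X̊, ξ)` be the reduced free product of the family
`(X_i, X̊_i, ξ_i)_{i∈I}` and `φ_ξ` the associated functional on `L(X)`.  Set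
`A_{i,ℓ} = λ_i(L(X_i))` and `A_{i,c} = P_i λ_i(L(X_i)) P_i`.  If `z₁ ∈ A_{i,c}` and
`z₂ ∈ A_{j,c}`, then there exist `T₁ ∈ A_{i,ℓ}` and `T₂ ∈ A_{j,ℓ}` with
`φ_ξ(z₁ z z₂) = φ_ξ(T₁ z T₂)` for all `z ∈ L(X)`; moreover `T₁` and `T₂` are uniquely
determined by `z₁` and `z₂` respectively (via `z₁ = P_i T₁ P_i`, `z₂ = P_j T₂ P_j`). -/
theorem central_face_replacement {I : Type} [DecidableEq I]
    (X : I → Type) [∀ i, AddCommGroup (X i)] [∀ i, Module ℂ (X i)]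
    (Xo : ∀ i, Submodule ℂ (X i)) (ξ : ∀ i, X i)
    (hcompl : ∀ i, IsCompl (ℂ ∙ ξ i) (Xo i)) (hξ : ∀ i, ξ i ∉ Xo i)
    (V : ∀ i, (X i ⊗[ℂ] FPL (Mf X Xo) i) ≃ₗ[ℂ] FPr (Mf X Xo))
    (hV : ∀ i, NaturalL X Xo ξ i (V i))
    (i j : I) (z₁ z₂ : FPr (Mf X Xo) →ₗ[ℂ] FPr (Mf X Xo))
    (hz₁ : ∃ a : X i →ₗ[ℂ] X i,
      z₁ = Pproj (Mf X Xo) i ∘ₗ lam X Xo V i a ∘ₗ Pproj (Mf X Xo) i)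
    (hz₂ : ∃ a : X j →ₗ[ℂ] X j,
      z₂ = Pproj (Mf X Xo) j ∘ₗ lam X Xo V j a ∘ₗ Pproj (Mf X Xo) j) :
    ∃ T₁ T₂ : FPr (Mf X Xo) →ₗ[ℂ] FPr (Mf X Xo),
      (∃ a : X i →ₗ[ℂ] X i, T₁ = lam X Xo V i a) ∧
      (∃ a : X j →ₗ[ℂ] X j, T₂ = lam X Xo V j a) ∧
      (∀ z : FPr (Mf X Xo) →ₗ[ℂ] FPr (Mf X Xo),
        phiXi X Xo (z₁ ∘ₗ z ∘ₗ z₂) = phiXi X Xo (T₁ ∘ₗ z ∘ₗ T₂)) ∧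
      z₁ = Pproj (Mf X Xo) i ∘ₗ T₁ ∘ₗ Pproj (Mf X Xo) i ∧
      z₂ = Pproj (Mf X Xo) j ∘ₗ T₂ ∘ₗ Pproj (Mf X Xo) j ∧
      (∀ T₁' : FPr (Mf X Xo) →ₗ[ℂ] FPr (Mf X Xo),
        (∃ a : X i →ₗ[ℂ] X i, T₁' = lam X Xo V i a) →
        z₁ = Pproj (Mf X Xo) i ∘ₗ T₁' ∘ₗ Pproj (Mf X Xo) i → T₁' = T₁) ∧
      (∀ T₂' : FPr (Mf X Xo) →ₗ[ℂ] FPr (Mf X Xo),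
        (∃ a : X j →ₗ[ℂ] X j, T₂' = lam X Xo V j a) →
        z₂ = Pproj (Mf X Xo) j ∘ₗ T₂' ∘ₗ Pproj (Mf X Xo) j → T₂' = T₂) := by
  obtain ⟨a, ha⟩ := hz₁
  obtain ⟨b, hb⟩ := hz₂
  refine ⟨lam X Xo V i a, lam X Xo V j b, ⟨a, rfl⟩, ⟨b, rfl⟩, ?_, ha, hb, ?_, ?_⟩
  · intro z
    have hz2xi : z₂ (xiFP (Mf X Xo)) = lam X Xo V j b (xiFP (Mf X Xo)) := by
      obtain ⟨c, m, hm⟩ := decomp (hcompl j) (b (ξ j))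
      rw [hb]
      simp only [LinearMap.coe_comp, Function.comp_apply]
      rw [Pproj_xi, lam_xi X Xo ξ V j (hV j) b hm]
      exact Pproj_fix (Mf X Xo) j c m
    simp only [phiXi, LinearMap.coe_comp, Function.comp_apply, hz2xi, ha]
    rw [Pproj_fst, fst_lam_P X Xo ξ V i (hV i) (hcompl i) a]
  · rintro T₁' ⟨a', rfl⟩ h'
    have : a' = a := lam_compress_inj X Xo ξ V i (hV i) (hcompl i) a' a
      (h'.symm.trans ha)
    rw [this]
  · rintro T₂' ⟨b', rfl⟩ h'
    have : b' = b := lam_compress_inj X Xo ξ V j (hV j) (hcompl j) b' b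
      (h'.symm.trans hb)
    rw [this]

end FFB
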